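/- Let G be a saturated nonhamiltonian graph on n vertices, and suppose for some k ≥ 2 the number of k-cliques of G exceeds binomial(n - ⌊(n-1)/2⌋, k) + ⌊(n-1)/2⌋·binomial(⌊(n-1)/2⌋, k-1). Then for some 1 ≤ r ≤ ⌊(n-1)/2⌋, V(G) contains a subset D of r vertices of degree at most r such that G - D is a complete graph. -/

import Mathlib

/-- A graph is saturated if it is nonhamiltonian but adding any missing edge
creates a Hamiltonian cycle. -/
def SaturatedNonhamiltonian {V : Type*} [Fintype V] [DecidableEq V] (G : SimpleGraph V) : Prop :=
  ¬ G.IsHamiltonian ∧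
    ∀ u v : V, u ≠ v → ¬ G.Adj u v → (G ⊔ SimpleGraph.edge u v).IsHamiltonian


open List

section Helpers
variable {V : Type*} [DecidableEq V] {G : SimpleGraph V}

/-- Build a walk from a chain of adjacencies. -/
def buildWalk (G : SimpleGraph V) : (l : List V) → (x y : V) →
    List.Chain G.Adj x (l ++ [y]) → G.Walk x y
  | [], x, y, h => SimpleGraph.Walk.cons (List.chain_cons.mp h).1 SimpleGraph.Walk.nil
  | b :: l, x, y, h => SimpleGraph.Walk.cons (List.chain_cons.mp h).1
      (buildWalk G l b y (List.chain_cons.mp h).2)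

lemma support_buildWalk : ∀ (l : List V) (x y : V) (h : List.Chain G.Adj x (l ++ [y])),
    (buildWalk G l x y h).support = x :: (l ++ [y])
  | [], x, y, h => rfl
  | b :: l, x, y, h => by
    simp only [buildWalk, SimpleGraph.Walk.support_cons, support_buildWalk l b y _, cons_append]
    exact congrArg (List.cons x) (support_buildWalk l b y _)

lemma walk_length_zero_of_nodup {x : V} (q : G.Walk x x) (h : q.support.Nodup) :
    q.length = 0 := by
  cases q with
  | nil => rfl
  | cons hadj q' =>
    exfalso
    simp only [SimpleGraph.Walk.support_cons, List.nodup_cons] at h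
    exact h.1 q'.end_mem_support

lemma length_eq_one_of_edge_mem {x : V} {y : V} (q : G.Walk y x)
    (hnd : q.support.Nodup) (hmem : s(x, y) ∈ q.edges) : q.length = 1 := by
  induction q with
  | nil => simp at hmem
  | @cons y b x' hadj q' ih =>
    simp only [SimpleGraph.Walk.edges_cons, List.mem_cons] at hmem
    simp only [SimpleGraph.Walk.support_cons, List.nodup_cons] at hnd
    rcases hmem with heq | hmem
    · rw [Sym2.eq_iff] at heq
      rcases heq with ⟨hxy, _⟩ | ⟨hxb, _⟩
      · exact absurd (hxy ▸ q'.end_mem_support) hnd.1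
      · subst hxb
        rw [SimpleGraph.Walk.length_cons, walk_length_zero_of_nodup q' hnd.2]
    · exact absurd (SimpleGraph.Walk.snd_mem_support_of_mem_edges q' hmem) hnd.1

lemma isHamiltonian_of_list [Fintype V] (hcard : 3 ≤ Fintype.card V) (x : V) (l : List V)
    (hnd : (x :: l).Nodup) (hcov : ∀ v : V, v ∈ x :: l)
    (hch : List.Chain G.Adj x (l ++ [x])) : G.IsHamiltonian := by
  classical
  have hlen : (x :: l).length = Fintype.card V := by
    rw [← List.toFinset_card_of_nodup hnd]
    congr 1
    · apply Finset.eq_univ_iff_forall.mpr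
      intro v; simpa using hcov v
  obtain ⟨b, c, t, rfl⟩ : ∃ b c t, l = b :: c :: t := by
    match l with
    | [] => simp at hlen; omega
    | [b] => simp at hlen; omega
    | b :: c :: t => exact ⟨b, c, t, rfl⟩
  set l : List V := c :: t with hl
  simp only [List.Chain] at hch
  rw [show (b :: l) ++ [x] = b :: (l ++ [x]) from rfl, List.chain_cons] at hch
  obtain ⟨hxb, hch'⟩ := hch
  set q : G.Walk b x := buildWalk G l b x hch' with hq
  have hq_supp : q.support = b :: (l ++ [x]) := support_buildWalk l b x hch'
  have hq_nodup : (b :: (l ++ [x])).Nodup := by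
    have := (List.nodup_middle (a := x) (l₁ := b :: l) (l₂ := [])).mpr (by simpa using hnd)
    simpa using this
  have hq_path : q.IsPath := SimpleGraph.Walk.IsPath.mk' (by rw [hq_supp]; exact hq_nodup)
  have hq_len : q.length = l.length + 1 := by
    have := SimpleGraph.Walk.length_support q
    rw [hq_supp] at this
    simp at this
    omega
  have hedge : s(x, b) ∉ q.edges := by
    intro hmem
    have := length_eq_one_of_edge_mem q (by rw [hq_supp]; exact hq_nodup) hmem
    rw [hq_len] at this
    simp [hl] at this
  set p : G.Walk x x := SimpleGraph.Walk.cons hxb q with hp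
  have hcyc : p.IsCycle := (SimpleGraph.Walk.cons_isCycle_iff q hxb).mpr ⟨hq_path, hedge⟩
  have hham : p.IsHamiltonianCycle := by
    rw [SimpleGraph.Walk.isHamiltonianCycle_iff_isCycle_and_support_count_tail_eq_one]
    refine ⟨hcyc, fun a => ?_⟩
    have hsupp : p.support = x :: q.support := rfl
    rw [hsupp, List.tail_cons, hq_supp]
    apply List.count_eq_one_of_mem hq_nodup
    have hc := hcov a
    simp only [List.mem_cons, List.mem_append] at hc ⊢
    tauto
  exact fun _ => ⟨x, p, hham⟩

lemma list_of_isHamiltonian [Fintype V] (hcard : 3 ≤ Fintype.card V) (h : G.IsHamiltonian) :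
    ∃ (x : V) (l : List V), (x :: l).Nodup ∧ (∀ v : V, v ∈ x :: l) ∧
      List.Chain G.Adj x (l ++ [x]) := by
  obtain ⟨a, p, hp⟩ := h (by omega)
  have hnil : ¬ p.Nil := hp.isCycle.not_nil
  have hTcount : ∀ v, p.support.tail.count v = 1 := by
    intro v
    have := hp.isHamiltonian_tail v
    rwa [← SimpleGraph.Walk.cons_support_tail hnil, List.tail_cons]
  set T := p.support.tail with hT
  have hTnodup : T.Nodup := List.nodup_iff_count_le_one.mpr fun v => (hTcount v).le
  have hTmem : ∀ v, v ∈ T := fun v => List.count_pos_iff.mp (by rw [hTcount v]; norm_num)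
  have hTne : T ≠ [] := List.ne_nil_of_mem (hTmem a)
  have hsupp : p.support = a :: T := p.support_eq_cons
  have h2 : T.getLast? = some a := by
    have h1 : p.support.getLast? = some a := by
      rw [List.getLast?_eq_getLast_of_ne_nil p.support_ne_nil]
      exact congrArg some p.getLast_support
    obtain ⟨t0, T', hT'⟩ := List.exists_cons_of_ne_nil hTne
    rw [hsupp, hT'] at h1
    rw [hT']
    rwa [List.getLast?_cons_cons] at h1
  have hTeq : T.dropLast ++ [a] = T := List.dropLast_append_getLast? a (by rw [h2]; rfl)
  refine ⟨a, T.dropLast, ?_, ?_, ?_⟩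
  · rw [List.nodup_cons]
    have := hTeq ▸ hTnodup
    rw [List.nodup_append] at this
    exact ⟨fun hmem => this.2.2 a hmem a (by simp) rfl, this.1⟩
  · intro v
    have := hTmem v
    rw [← hTeq, List.mem_append] at this
    rcases this with h | h
    · exact List.mem_cons_of_mem _ h
    · simp at h; simp [h]
  · have hch := p.isChain_adj_support
    rw [hsupp] at hch
    rw [hTeq]
    exact hch

end Helpers

section ListLemmas
variable {V : Type*} {R : V → V → Prop}

lemma chain'_rev (hsymm : ∀ a b, R a b → R b a) {l : List V} (h : List.Chain' R l) :
    List.Chain' R l.reverse :=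
  List.isChain_reverse.mpr (h.imp fun a b hab => hsymm a b hab)

lemma chain_of_ne (hR : ∀ a b : V, a ≠ b → R a b) :
    ∀ (a z : V) (l : List V), a ≠ z → a ∉ l → z ∉ l → l.Nodup →
      List.Chain R a (l ++ [z])
  | a, z, [], hne, _, _, _ => List.Chain.cons (hR a z hne) List.Chain.nil
  | a, z, b :: l, hne, ha, hz, hnd => by
    rw [List.cons_append]
    simp only [List.Chain]
    rw [List.chain_cons]
    rw [List.mem_cons, not_or] at ha hz
    rw [List.nodup_cons] at hnd
    exact ⟨hR a b (fun h => ha.1 h),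
      chain_of_ne hR b z l (fun h => hz.1 h.symm) hnd.1 hz.2 hnd.2⟩

lemma rotate_cycle {x u : V} {s₁ s₂ : List V}
    (h : List.Chain R x ((s₁ ++ u :: s₂) ++ [x])) :
    List.Chain R u ((s₂ ++ x :: s₁) ++ [u]) := by
  have h1 : List.Chain' R ((x :: s₁) ++ u :: (s₂ ++ [x])) := by
    show List.Chain' R (x :: (s₁ ++ (u :: (s₂ ++ [x]))))
    have : (s₁ ++ u :: s₂) ++ [x] = s₁ ++ (u :: (s₂ ++ [x])) := by simp
    rw [this] at h
    exact h
  obtain ⟨c1, c2⟩ := List.isChain_split.mp h1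
  show List.Chain' R (u :: ((s₂ ++ x :: s₁) ++ [u]))
  have hgoal : u :: ((s₂ ++ x :: s₁) ++ [u]) = (u :: s₂) ++ x :: (s₁ ++ [u]) := by simp
  rw [hgoal]
  apply List.isChain_split.mpr
  constructor
  · show List.Chain' R (u :: (s₂ ++ [x]))
    exact c2
  · show List.Chain' R ((x :: s₁) ++ [u])
    exact c1

end ListLemmas

section Conv
variable {V : Type*} [DecidableEq V] {G : SimpleGraph V}

lemma chain_sup_edge_to {u v : V} (hne : u ≠ v) :
    ∀ (a : V) (L : List V), u ∉ L → (a = u → L.head? ≠ some v) →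
      List.Chain (G ⊔ SimpleGraph.edge u v).Adj a L → List.Chain G.Adj a L
  | _, [], _, _, _ => List.Chain.nil
  | a, b :: L, hu, hh, h => by
    simp only [List.Chain] at h ⊢
    rw [List.chain_cons] at h ⊢
    obtain ⟨hab, h2⟩ := h
    rw [List.mem_cons, not_or] at hu
    have hbu : b ≠ u := fun h => hu.1 h.symm
    refine ⟨?_, chain_sup_edge_to hne b L hu.2 (fun hb => absurd hb hbu) h2⟩
    rcases hab with hG | hE
    · exact hG
    · exfalso
      rw [SimpleGraph.edge_adj] at hE
      rcases hE.1 with ⟨ha, hb⟩ | ⟨_, hb⟩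
      · exact hh ha (by rw [hb]; rfl)
      · exact hbu hb

end Conv

section Cross
variable {V : Type*} [DecidableEq V] [Fintype V] {G : SimpleGraph V} [DecidableRel G.Adj]

lemma cross (h3 : 3 ≤ Fintype.card V) {u v : V}
    (hdeg : Fintype.card V ≤ G.degree u + G.degree v)
    (P : List V) (hnd : P.Nodup) (hcov : ∀ w : V, w ∈ P)
    (hch : List.Chain' G.Adj P) (hh : P.head? = some u) (hl : P.getLast? = some v) :
    G.IsHamiltonian := by
  classical
  obtain ⟨P', rfl⟩ : ∃ P', P = u :: P' := by
    cases P with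
    | nil => simp at hh
    | cons a P'' =>
      simp only [List.head?_cons, Option.some.injEq] at hh
      exact ⟨P'', by rw [hh]⟩
  set P : List V := u :: P' with hP
  set N := P.length with hN
  have hlen : N = Fintype.card V := by
    rw [hN, ← List.toFinset_card_of_nodup hnd]
    congr 1
    apply Finset.eq_univ_iff_forall.mpr
    intro w; simpa using hcov w
  have hN3 : 3 ≤ N := hlen ▸ h3
  set g : ℕ → V := fun i => P.getD i u with hg
  have hgel : ∀ (i : ℕ) (h : i < N), g i = P[i]'h := fun i h => List.getD_eq_getElem P u h
  have hginj : ∀ i j, i < N → j < N → g i = g j → i = j := by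
    intro i j hi hj hij
    rw [hgel i hi, hgel j hj] at hij
    exact (hnd.getElem_inj_iff).mp hij
  have hg0 : g 0 = u := rfl
  have hgmem : ∀ w : V, ∃ j, j < N ∧ g j = w := by
    intro w
    obtain ⟨j, hj, hjw⟩ := List.mem_iff_getElem.mp (hcov w)
    exact ⟨j, hj, by rw [hgel j hj]; exact hjw⟩
  have hgN : g (N - 1) = v := by
    have h1 := P.getLast?_eq_getElem?
    rw [hl, List.getElem?_eq_getElem (show N - 1 < N by omega)] at h1
    rw [hgel _ (show N - 1 < N by omega)]
    exact (Option.some_injective _ h1).symm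
  set A := (Finset.range (N-1)).filter (fun i => G.Adj u (g (i+1))) with hA
  set B := (Finset.range (N-1)).filter (fun i => G.Adj v (g i)) with hB
  have hcardA : A.card = G.degree u := by
    rw [SimpleGraph.degree]
    apply Finset.card_bij (fun i _ => g (i+1))
    · intro a ha
      rw [hA, Finset.mem_filter] at ha
      exact (G.mem_neighborFinset u _).mpr ha.2
    · intro i hi j hj hij
      rw [hA, Finset.mem_filter, Finset.mem_range] at hi hj
      have := hginj (i+1) (j+1) (by omega) (by omega) hij
      omega
    · intro w hw
      rw [G.mem_neighborFinset] at hw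
      obtain ⟨j, hj, hjw⟩ := hgmem w
      have hj0 : j ≠ 0 := by
        intro h; subst h; rw [hg0] at hjw; exact G.ne_of_adj hw hjw
      refine ⟨j - 1, ?_, ?_⟩
      · rw [hA, Finset.mem_filter, Finset.mem_range]
        rw [show j - 1 + 1 = j by omega]
        exact ⟨by omega, hjw ▸ hw⟩
      · rw [show j - 1 + 1 = j by omega]; exact hjw
  have hcardB : B.card = G.degree v := by
    rw [SimpleGraph.degree]
    apply Finset.card_bij (fun i _ => g i)
    · intro a ha
      rw [hB, Finset.mem_filter] at ha
      exact (G.mem_neighborFinset v _).mpr ha.2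
    · intro i hi j hj hij
      rw [hB, Finset.mem_filter, Finset.mem_range] at hi hj
      exact hginj i j (by omega) (by omega) hij
    · intro w hw
      rw [G.mem_neighborFinset] at hw
      obtain ⟨j, hj, hjw⟩ := hgmem w
      have hjN : j ≠ N - 1 := by
        intro h; subst h; rw [hgN] at hjw; exact G.ne_of_adj hw hjw
      exact ⟨j, by rw [hB, Finset.mem_filter, Finset.mem_range]; exact ⟨by omega, hjw ▸ hw⟩, hjw⟩
  have hABsub : A ∪ B ⊆ Finset.range (N-1) := by
    apply Finset.union_subset <;> exact Finset.filter_subset _ _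
  have hABcard : (A ∪ B).card ≤ N - 1 := by
    have := Finset.card_le_card hABsub
    rwa [Finset.card_range] at this
  have hunion := Finset.card_union_add_card_inter A B
  have hABpos : 0 < (A ∩ B).card := by
    rw [hcardA, hcardB] at hunion
    omega
  obtain ⟨i, hi⟩ := Finset.card_pos.mp hABpos
  rw [Finset.mem_inter, hA, hB, Finset.mem_filter, Finset.mem_filter, Finset.mem_range] at hi
  obtain ⟨⟨hiN, hAu⟩, _, hBv⟩ := hi
  -- construct the new hamiltonian cycle
  set l : List V := P'.take i ++ (P.drop (i+1)).reverse with hldef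
  have hC : u :: l = P.take (i+1) ++ (P.drop (i+1)).reverse := by
    rw [hldef, hP, List.take_succ_cons, List.cons_append]
  have hperm : (u :: l).Perm P := by
    rw [hC]
    have h1 : (P.take (i+1) ++ (P.drop (i+1)).reverse).Perm
        (P.take (i+1) ++ P.drop (i+1)) := List.Perm.append_left _ (List.reverse_perm _)
    rwa [List.take_append_drop] at h1
  have hdropne : P.drop (i+1) ≠ [] := by
    apply List.ne_nil_of_length_pos
    rw [List.length_drop]
    omega
  have hchain : List.Chain' G.Adj ((u :: l) ++ [u]) := by
    rw [hC, List.append_assoc]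
    apply List.isChain_append.mpr
    refine ⟨hch.take _, ?_, ?_⟩
    · have h1 : List.Chain' G.Adj (u :: P.drop (i+1)) := by
        apply List.isChain_cons.mpr
        refine ⟨?_, hch.drop _⟩
        intro y hy
        rw [List.head?_drop, List.getElem?_eq_getElem (show i + 1 < N by omega)] at hy
        rw [Option.mem_some_iff] at hy
        rw [← hy, ← hgel _ (show i + 1 < N by omega)]
        exact hAu
      have h2 := chain'_rev (fun a b h => h.symm) h1
      rwa [List.reverse_cons] at h2
    · intro x hx y hy
      have hxval : x = g i := by
        rw [List.take_succ, List.getElem?_eq_getElem (show i < N by omega)] at hx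
        simp only [Option.toList_some, List.getLast?_concat, Option.mem_some_iff] at hx
        rw [← hx, hgel _ (show i < N by omega)]
      have hyval : y = v := by
        rw [List.head?_append_of_ne_nil _ (by simpa using hdropne)] at hy
        rw [List.head?_reverse] at hy
        rw [List.getLast?_eq_getElem?, List.getElem?_drop, List.length_drop] at hy
        rw [show i + 1 + (N - (i+1) - 1) = N - 1 by omega] at hy
        rw [List.getElem?_eq_getElem (show N - 1 < N by omega), Option.mem_some_iff] at hy
        rw [← hy, ← hgel _ (show N - 1 < N by omega), hgN]
      rw [hxval, hyval]
      exact hBv.symm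
  exact isHamiltonian_of_list h3 u l (hperm.nodup_iff.mpr hnd)
    (fun w => hperm.mem_iff.mpr (hcov w)) hchain

end Cross

section Ore
variable {V : Type*} [Fintype V] [DecidableEq V] {G : SimpleGraph V} [DecidableRel G.Adj]

lemma length_eq_card {l : List V} (hnd : l.Nodup) (hcov : ∀ v : V, v ∈ l) :
    l.length = Fintype.card V := by
  rw [← List.toFinset_card_of_nodup hnd]
  congr 1
  apply Finset.eq_univ_iff_forall.mpr
  intro w; simpa using hcov w

lemma ore (hsat : SaturatedNonhamiltonian G) (h3 : 3 ≤ Fintype.card V)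
    {u v : V} (hne : u ≠ v) (hnadj : ¬ G.Adj u v) :
    G.degree u + G.degree v ≤ Fintype.card V - 1 := by
  by_contra hdeg
  have hdeg' : Fintype.card V ≤ G.degree u + G.degree v := by omega
  have hdeg'' : Fintype.card V ≤ G.degree v + G.degree u := by omega
  have hH := hsat.2 u v hne hnadj
  set H := G ⊔ SimpleGraph.edge u v with hHdef
  have hsymmH : ∀ a b : V, H.Adj a b → H.Adj b a := fun a b h => h.symm
  obtain ⟨x, l0, hnd0, hcov0, hch0⟩ := list_of_isHamiltonian h3 hH
  obtain ⟨t, hndt, hcovt, hcht⟩ : ∃ t : List V, (u :: t).Nodup ∧ (∀ w : V, w ∈ u :: t) ∧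
      List.Chain H.Adj u (t ++ [u]) := by
    rcases List.mem_cons.mp (hcov0 u) with rfl | hu
    · exact ⟨l0, hnd0, hcov0, hch0⟩
    · obtain ⟨s₁, s₂, rfl⟩ := List.append_of_mem hu
      have p1 : (s₂ ++ x :: s₁).Perm (x :: (s₂ ++ s₁)) := List.perm_middle
      have p2 := p1.cons u
      have p3 : (u :: x :: (s₂ ++ s₁)).Perm (x :: u :: (s₂ ++ s₁)) :=
        List.Perm.swap x u _
      have p4 : (s₂ ++ s₁).Perm (s₁ ++ s₂) := List.perm_append_comm
      have p5 := (p4.cons u).cons x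
      have p6 : (x :: (s₁ ++ u :: s₂)).Perm (x :: (u :: (s₁ ++ s₂))) :=
        (List.perm_middle).cons x
      have hperm : (u :: (s₂ ++ x :: s₁)).Perm (x :: (s₁ ++ u :: s₂)) :=
        (p2.trans (p3.trans p5)).trans p6.symm
      exact ⟨s₂ ++ x :: s₁, hperm.nodup_iff.mpr hnd0,
        fun w => hperm.mem_iff.mpr (hcov0 w), rotate_cycle hch0⟩
  have hvt : v ∈ t := by
    rcases List.mem_cons.mp (hcovt v) with h | h
    · exact absurd h.symm hne
    · exact h
  obtain ⟨t₁, t₂, rfl⟩ := List.append_of_mem hvt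
  have hu_nt : u ∉ t₁ ++ v :: t₂ := (List.nodup_cons.mp hndt).1
  have hnd_t : (t₁ ++ v :: t₂).Nodup := (List.nodup_cons.mp hndt).2
  have hu1 : u ∉ t₁ := fun h => hu_nt (List.mem_append_left _ h)
  have hu2 : u ∉ t₂ := fun h => hu_nt (List.mem_append_right _ (List.mem_cons_of_mem _ h))
  have hndmid := List.nodup_middle.mp hnd_t
  have hv12 : v ∉ t₁ ++ t₂ := (List.nodup_cons.mp hndmid).1
  have hv1 : v ∉ t₁ := fun h => hv12 (List.mem_append_left _ h)
  have hv2 : v ∉ t₂ := fun h => hv12 (List.mem_append_right _ h)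
  have hlent : (u :: (t₁ ++ v :: t₂)).length = Fintype.card V := length_eq_card hndt hcovt
  have hch1 : List.Chain' H.Adj ((u :: t₁) ++ v :: (t₂ ++ [u])) := by
    have heq : (t₁ ++ v :: t₂) ++ [u] = t₁ ++ (v :: (t₂ ++ [u])) := by simp
    rw [heq] at hcht
    exact hcht
  obtain ⟨c1, c2⟩ := List.isChain_split.mp hch1
  -- conversion of the first part (if t₁ nonempty)
  have conv1 : t₁ ≠ [] → List.Chain' G.Adj ((u :: t₁) ++ [v]) := by
    intro ht₁
    show List.Chain G.Adj u (t₁ ++ [v])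
    apply chain_sup_edge_to hne u (t₁ ++ [v])
    · intro h
      rcases List.mem_append.mp h with h | h
      · exact hu1 h
      · simp at h; exact hne h
    · intro _ hhead
      obtain ⟨a, t₁', rfl⟩ := List.exists_cons_of_ne_nil ht₁
      simp only [List.cons_append, List.head?_cons, Option.some.injEq] at hhead
      exact hv1 (hhead ▸ List.mem_cons_self (a := a) (l := t₁'))
    · exact c1
  have conv2 : t₂ ≠ [] → List.Chain' G.Adj (v :: (t₂ ++ [u])) := by
    intro ht₂
    have hrev := chain'_rev hsymmH c2
    have heqr : (v :: (t₂ ++ [u])).reverse = u :: (t₂.reverse ++ [v]) := by simp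
    rw [heqr] at hrev
    have hconv : List.Chain G.Adj u (t₂.reverse ++ [v]) := by
      apply chain_sup_edge_to hne u (t₂.reverse ++ [v])
      · intro h
        rcases List.mem_append.mp h with h | h
        · exact hu2 (List.mem_reverse.mp h)
        · simp at h; exact hne h
      · intro _ hhead
        have hrne : t₂.reverse ≠ [] := fun h => ht₂ (by simpa using congrArg List.reverse h)
        obtain ⟨c, t₂', hc⟩ := List.exists_cons_of_ne_nil hrne
        rw [hc] at hhead
        simp only [List.cons_append, List.head?_cons, Option.some.injEq] at hhead
        apply hv2
        rw [← List.mem_reverse, hc, hhead]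
        exact List.mem_cons_self (a := v) (l := t₂')
      · exact hrev
    have hconv' : List.Chain' G.Adj (u :: (t₂.reverse ++ [v])) := hconv
    have hback := chain'_rev (fun a b (h : G.Adj a b) => h.symm) hconv'
    have heqb : (u :: (t₂.reverse ++ [v])).reverse = v :: (t₂ ++ [u]) := by simp
    show List.Chain' G.Adj (v :: (t₂ ++ [u]))
    rw [← heqb]
    exact hback
  by_cases ht₂ : t₂ = []
  · subst ht₂
    have ht₁ : t₁ ≠ [] := by
      intro h; subst h; simp at hlent; omega
    apply hsat.1
    apply cross h3 hdeg' ((u :: t₁) ++ [v])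
    · have : (u :: t₁) ++ [v] = u :: (t₁ ++ [v]) := by simp
      rw [this]
      simpa using hndt
    · intro w
      have := hcovt w
      simpa using this
    · exact conv1 ht₁
    · simp
    · exact List.getLast?_concat
  · by_cases ht₁ : t₁ = []
    · subst ht₁
      apply hsat.1
      have hperm : ((v :: t₂) ++ [u]).Perm (u :: (v :: t₂)) := List.perm_append_singleton _ _
      apply cross h3 hdeg'' ((v :: t₂) ++ [u])
      · apply hperm.nodup_iff.mpr
        simpa using hndt
      · intro w
        apply hperm.mem_iff.mpr
        have := hcovt w
        simpa using this
      · have := conv2 ht₂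
        simpa using this
      · simp
      · exact List.getLast?_concat
    · apply hsat.1
      have hcG : List.Chain' G.Adj ((u :: t₁) ++ v :: (t₂ ++ [u])) :=
        List.isChain_split.mpr ⟨conv1 ht₁, conv2 ht₂⟩
      apply isHamiltonian_of_list h3 u (t₁ ++ v :: t₂) hndt hcovt
      show List.Chain' G.Adj (u :: ((t₁ ++ v :: t₂) ++ [u]))
      have heq : u :: ((t₁ ++ v :: t₂) ++ [u]) = (u :: t₁) ++ v :: (t₂ ++ [u]) := by simp
      rw [heq]
      exact hcG

end Ore

section Complete
variable {V : Type*} [Fintype V] [DecidableEq V] {G : SimpleGraph V}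

lemma complete_isHamiltonian (h3 : 3 ≤ Fintype.card V)
    (hcomp : ∀ a b : V, a ≠ b → G.Adj a b) : G.IsHamiltonian := by
  classical
  have hnd : (Finset.univ : Finset V).toList.Nodup := Finset.nodup_toList _
  have hmem : ∀ v : V, v ∈ (Finset.univ : Finset V).toList :=
    fun v => Finset.mem_toList.mpr (Finset.mem_univ v)
  have hlen : (Finset.univ : Finset V).toList.length = Fintype.card V := by
    rw [Finset.length_toList, Finset.card_univ]
  obtain ⟨x, b, l, hXL⟩ : ∃ x b l, (Finset.univ : Finset V).toList = x :: b :: l := by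
    match hL2 : (Finset.univ : Finset V).toList with
    | [] => rw [hL2] at hlen; simp at hlen; omega
    | [a] => rw [hL2] at hlen; simp at hlen; omega
    | x :: b :: l => exact ⟨x, b, l, rfl⟩
  rw [hXL] at hnd hmem
  apply isHamiltonian_of_list h3 x (b :: l) hnd hmem
  rw [List.cons_append]
  simp only [List.Chain]
  rw [List.chain_cons]
  have hndc := List.nodup_cons.mp hnd
  have hndc2 := List.nodup_cons.mp hndc.2
  have hxb : x ≠ b := fun h => hndc.1 (h ▸ List.mem_cons_self (a := b) (l := l))
  have hxl : x ∉ l := fun h => hndc.1 (List.mem_cons_of_mem _ h)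
  have hbl : b ∉ l := hndc2.1
  refine ⟨hcomp x b hxb, ?_⟩
  exact chain_of_ne hcomp b x l (fun h => hxb h.symm) hbl hxl hndc2.2

end Complete

lemma hockey (r : ℕ) : ∀ (b a : ℕ), a ≤ b + 1 →
    Nat.choose a (r+1) + ∑ j ∈ Finset.Icc a b, Nat.choose j r ≤ Nat.choose (b+1) (r+1)
  | 0, a, ha => by
    interval_cases a
    · have h1 : Nat.choose (0+1) (r+1) = Nat.choose 0 r + Nat.choose 0 (r+1) :=
        Nat.choose_succ_succ' 0 r
      simp only [Finset.Icc_self, Finset.sum_singleton, Nat.choose_zero_succ]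
      omega
    · simp
  | (b+1), a, ha => by
    rcases Nat.lt_or_ge a (b+2) with h | h
    · have hIc : ∑ j ∈ Finset.Icc a (b+1), Nat.choose j r
          = (∑ j ∈ Finset.Icc a b, Nat.choose j r) + Nat.choose (b+1) r :=
        Finset.sum_Icc_succ_top (by omega) _
      rw [hIc]
      have IH := hockey r b a (by omega)
      have hcs : Nat.choose (b+1+1) (r+1) = Nat.choose (b+1) r + Nat.choose (b+1) (r+1) :=
        Nat.choose_succ_succ' _ _
      omega
    · have : a = b + 2 := by omega
      subst this
      rw [Finset.Icc_eq_empty (by omega)]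
      simp

section Count
variable {V : Type*} [Fintype V] [DecidableEq V] [LinearOrder V] [Nonempty V]
  {G : SimpleGraph V} [DecidableRel G.Adj]

lemma clique_count_bound (k m : ℕ) (D : Finset V) (hdeg : ∀ v ∈ D, G.degree v ≤ m) :
    (G.cliqueFinset k).card ≤ (Fintype.card V - D.card).choose k +
      ∑ i ∈ Finset.range D.card, (min m (Fintype.card V - 1 - i)).choose (k-1) := by
  classical
  set N := Fintype.card V with hN
  set e : V → ℕ := fun v => (D.filter (· < v)).card with he
  set S : V → Finset V := fun v => G.neighborFinset v \ (D.filter (· < v)) with hS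
  have hSdeg : ∀ v, (S v).card ≤ G.degree v :=
    fun v => Finset.card_le_card Finset.sdiff_subset
  have hSle : ∀ v, (S v).card ≤ N - 1 - e v := by
    intro v
    have hsub : S v ⊆ Finset.univ \ insert v (D.filter (· < v)) := by
      intro w hw
      rw [hS, Finset.mem_sdiff] at hw
      rw [Finset.mem_sdiff, Finset.mem_insert]
      refine ⟨Finset.mem_univ _, ?_⟩
      rintro (rfl | hmem)
      · rw [SimpleGraph.mem_neighborFinset] at hw
        exact G.irrefl hw.1
      · exact hw.2 hmem
    have hcard2 := Finset.card_le_card hsub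
    rw [Finset.card_sdiff_of_subset (Finset.subset_univ _), Finset.card_univ,
      Finset.card_insert_of_notMem (by simp)] at hcard2
    simp only [he, ← hN] at hcard2 ⊢
    omega
  -- split cliques
  have hsplit := Finset.card_filter_add_card_filter_not
    (s := G.cliqueFinset k) (p := fun K => (K ∩ D) = ∅)
  set C1 := (G.cliqueFinset k).filter (fun K => K ∩ D = ∅) with hC1
  set C2 := (G.cliqueFinset k).filter (fun K => ¬ (K ∩ D = ∅)) with hC2
  have hC1le : C1.card ≤ (N - D.card).choose k := by
    have hsub : C1 ⊆ (Finset.univ \ D).powersetCard k := by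
      intro K hK
      rw [hC1, Finset.mem_filter, SimpleGraph.mem_cliqueFinset_iff] at hK
      rw [Finset.mem_powersetCard]
      refine ⟨fun w hw => ?_, hK.1.2⟩
      rw [Finset.mem_sdiff]
      exact ⟨Finset.mem_univ _, fun hwD =>
        (Finset.eq_empty_iff_forall_notMem.mp hK.2 w) (Finset.mem_inter.mpr ⟨hw, hwD⟩)⟩
    have hle := Finset.card_le_card hsub
    rwa [Finset.card_powersetCard, Finset.card_sdiff_of_subset (Finset.subset_univ _),
      Finset.card_univ, ← hN] at hle
  set v₀ : V := Classical.arbitrary V with hv₀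
  set f0 : Finset V → V := fun K => if h : (K ∩ D).Nonempty then (K ∩ D).min' h else v₀
    with hf0
  have hf0min : ∀ K : Finset V, (K ∩ D).Nonempty → ∀ (h : (K ∩ D).Nonempty),
      f0 K = (K ∩ D).min' h := by
    intro K hne h
    rw [hf0]; simp only [dif_pos hne]
  have hC2mem : ∀ K ∈ C2, K ∈ G.cliqueFinset k ∧ (K ∩ D).Nonempty := by
    intro K hK
    rw [hC2, Finset.mem_filter] at hK
    exact ⟨hK.1, Finset.nonempty_of_ne_empty hK.2⟩
  have hf0K : ∀ K ∈ C2, f0 K ∈ K ∩ D := by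
    intro K hK
    obtain ⟨_, hne⟩ := hC2mem K hK
    rw [hf0min K hne hne]
    exact Finset.min'_mem _ _
  have hC2le : C2.card ≤ ∑ v ∈ D, ((S v).card).choose (k-1) := by
    have hcard3 : C2.card ≤ (D.sigma (fun v => (S v).powersetCard (k-1))).card := by
      apply Finset.card_le_card_of_injOn (fun K => ⟨f0 K, K.erase (f0 K)⟩)
      · intro K hK
        obtain ⟨hKcl, hne⟩ := hC2mem K hK
        rw [SimpleGraph.mem_cliqueFinset_iff] at hKcl
        have hf0mem := hf0K K hK
        rw [Finset.mem_inter] at hf0mem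
        rw [Finset.mem_coe, Finset.mem_sigma]
        refine ⟨hf0mem.2, ?_⟩
        rw [Finset.mem_powersetCard]
        constructor
        · intro w hw
          rw [Finset.mem_erase] at hw
          rw [hS, Finset.mem_sdiff]
          constructor
          · rw [SimpleGraph.mem_neighborFinset]
            exact hKcl.1 hf0mem.1 hw.2 (fun h => hw.1 h.symm)
          · intro hwf
            rw [Finset.mem_filter] at hwf
            have hmin := Finset.min'_le (K ∩ D) w (Finset.mem_inter.mpr ⟨hw.2, hwf.1⟩)
            rw [← hf0min K hne hne] at hmin
            exact absurd hwf.2 (not_lt.mpr hmin)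
        · rw [Finset.card_erase_of_mem hf0mem.1, hKcl.2]
      · intro K hK K' hK' heq
        have h1 : f0 K = f0 K' := congrArg (fun s : (_ : V) × Finset V => s.fst) heq
        have h2' : K.erase (f0 K) = K'.erase (f0 K') :=
          congrArg (fun s : (_ : V) × Finset V => s.snd) heq
        have hK0 := Finset.mem_inter.mp (hf0K K hK)
        have hK0' := Finset.mem_inter.mp (hf0K K' hK')
        rw [← Finset.insert_erase hK0.1, h2', h1, Finset.insert_erase hK0'.1]
    rw [Finset.card_sigma] at hcard3
    refine le_trans hcard3 (le_of_eq (Finset.sum_congr rfl fun v _ => ?_))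
    rw [Finset.card_powersetCard]
  have hsum1 : ∑ v ∈ D, ((S v).card).choose (k-1) ≤
      ∑ v ∈ D, (min m (N - 1 - e v)).choose (k-1) := by
    apply Finset.sum_le_sum
    intro v hv
    exact Nat.choose_le_choose _ (le_min (le_trans (hSdeg v) (hdeg v hv)) (hSle v))
  have hmono : ∀ v ∈ D, ∀ w ∈ D, v < w → e v < e w := by
    intro v hv w hw hvw
    have hsub : insert v (D.filter (· < v)) ⊆ D.filter (· < w) := by
      intro z hz
      rw [Finset.mem_insert] at hz
      rcases hz with rfl | hz
      · rw [Finset.mem_filter]; exact ⟨hv, hvw⟩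
      · rw [Finset.mem_filter] at hz ⊢; exact ⟨hz.1, lt_trans hz.2 hvw⟩
    have hle := Finset.card_le_card hsub
    rw [Finset.card_insert_of_notMem (by simp)] at hle
    simp only [he]
    omega
  have hinje : Set.InjOn e D := by
    intro v hv w hw hvw
    by_contra hne
    rcases lt_or_gt_of_ne hne with h | h
    · exact absurd hvw (Nat.ne_of_lt (hmono v hv w hw h))
    · exact absurd hvw.symm (Nat.ne_of_lt (hmono w hw v hv h))
  have himg : D.image e = Finset.range D.card := by
    apply Finset.eq_of_subset_of_card_le
    · intro i hi
      rw [Finset.mem_image] at hi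
      obtain ⟨v, hv, rfl⟩ := hi
      rw [Finset.mem_range]
      have hsub : D.filter (· < v) ⊆ D.erase v := by
        intro w hw
        rw [Finset.mem_filter] at hw
        rw [Finset.mem_erase]
        exact ⟨ne_of_lt hw.2, hw.1⟩
      have hle := Finset.card_le_card hsub
      rw [Finset.card_erase_of_mem hv] at hle
      have hd1 : 1 ≤ D.card := Finset.card_pos.mpr ⟨v, hv⟩
      simp only [he]
      omega
    · rw [Finset.card_range, Finset.card_image_of_injOn hinje]
  have hreidx : ∑ v ∈ D, (min m (N - 1 - e v)).choose (k-1)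
      = ∑ i ∈ Finset.range D.card, (min m (N - 1 - i)).choose (k-1) := by
    rw [← himg, Finset.sum_image hinje]
  omega
end Count

theorem saturated_structure (n k : ℕ) (hk : 2 ≤ k) (G : SimpleGraph (Fin n))
    [DecidableRel G.Adj] (hG : SaturatedNonhamiltonian G)
    (hcliques : (G.cliqueFinset k).card >
      (n - (n - 1) / 2).choose k + ((n - 1) / 2) * ((n - 1) / 2).choose (k - 1)) :
    ∃ r : ℕ, 1 ≤ r ∧ r ≤ (n - 1) / 2 ∧
      ∃ D : Finset (Fin n), D.card = r ∧ (∀ v ∈ D, G.degree v ≤ r) ∧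
        (∀ u v : Fin n, u ∉ D → v ∉ D → u ≠ v → G.Adj u v) := by
  have hcard : Fintype.card (Fin n) = n := Fintype.card_fin n
  set m := (n - 1) / 2 with hm
  have htot : (G.cliqueFinset k).card ≤ n.choose k := by
    have hclsub : G.cliqueFinset k ⊆ Finset.univ.powersetCard k := by
      intro s hs
      rw [SimpleGraph.mem_cliqueFinset_iff] at hs
      rw [Finset.mem_powersetCard]
      exact ⟨Finset.subset_univ _, hs.2⟩
    have := Finset.card_le_card hclsub
    rwa [Finset.card_powersetCard, Finset.card_univ, hcard] at this
  have h3 : 3 ≤ n := by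
    by_contra h
    push_neg at h
    have hm0 : m = 0 := by omega
    rw [hm0] at hcliques
    simp at hcliques
    omega
  have h3' : 3 ≤ Fintype.card (Fin n) := by rw [hcard]; omega
  haveI : Nonempty (Fin n) := ⟨⟨0, by omega⟩⟩
  have hOre : ∀ u v : Fin n, u ≠ v → ¬ G.Adj u v → G.degree u + G.degree v ≤ n - 1 := by
    intro u v h1 h2
    have := ore hG h3' h1 h2
    rwa [hcard] at this
  set D := Finset.univ.filter (fun v : Fin n => G.degree v ≤ m) with hD
  have hclq : ∀ u v : Fin n, u ∉ D → v ∉ D → u ≠ v → G.Adj u v := by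
    intro u v hu hv hne
    by_contra hnadj
    have h1 := hOre u v hne hnadj
    rw [hD, Finset.mem_filter] at hu hv
    push_neg at hu hv
    have hu' := hu (Finset.mem_univ u)
    have hv' := hv (Finset.mem_univ v)
    omega
  have hdn : D.card ≤ n := by
    have := Finset.card_le_univ D
    rwa [hcard] at this
  have hdm : D.card ≤ m := by
    by_contra hdm
    push_neg at hdm
    have hbound := clique_count_bound (G := G) k m D
      (fun v hv => (Finset.mem_filter.mp hv).2)
    rw [hcard] at hbound
    set d := D.card with hd
    have hsplitsum : ∑ i ∈ Finset.range d, (min m (n - 1 - i)).choose (k-1)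
        = (∑ i ∈ Finset.range m, (min m (n - 1 - i)).choose (k-1))
          + ∑ i ∈ Finset.Ico m d, (min m (n - 1 - i)).choose (k-1) := by
      rw [Finset.range_eq_Ico,
        ← Finset.sum_Ico_consecutive _ (Nat.zero_le m) (le_of_lt hdm),
        ← Finset.range_eq_Ico]
    have hb1 : ∑ i ∈ Finset.range m, (min m (n - 1 - i)).choose (k-1)
        ≤ m * m.choose (k-1) := by
      calc ∑ i ∈ Finset.range m, (min m (n - 1 - i)).choose (k-1)
          ≤ ∑ _i ∈ Finset.range m, m.choose (k-1) :=
            Finset.sum_le_sum (fun i _ => Nat.choose_le_choose _ (min_le_left _ _))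
        _ = m * m.choose (k-1) := by rw [Finset.sum_const, Finset.card_range, smul_eq_mul]
    have hb2 : ∑ i ∈ Finset.Ico m d, (min m (n - 1 - i)).choose (k-1)
        ≤ ∑ j ∈ Finset.Icc (n - d) (n - 1 - m), j.choose (k-1) := by
      have h1 : ∑ i ∈ Finset.Ico m d, (min m (n - 1 - i)).choose (k-1)
          ≤ ∑ i ∈ Finset.Ico m d, (n - 1 - i).choose (k-1) :=
        Finset.sum_le_sum (fun i _ => Nat.choose_le_choose _ (min_le_right _ _))
      refine le_trans h1 (le_of_eq ?_)
      refine Finset.sum_nbij' (fun i => n - 1 - i) (fun j => n - 1 - j) ?_ ?_ ?_ ?_ ?_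
      · intro a ha
        rw [Finset.mem_Ico] at ha
        rw [Finset.mem_Icc]
        omega
      · intro a ha
        rw [Finset.mem_Icc] at ha
        rw [Finset.mem_Ico]
        omega
      · intro a ha
        rw [Finset.mem_Ico] at ha
        omega
      · intro a ha
        rw [Finset.mem_Icc] at ha
        omega
      · intro a _
        rfl
    have hhock := hockey (k-1) (n-1-m) (n-d) (by omega)
    rw [show k - 1 + 1 = k by omega, show n - 1 - m + 1 = n - m by omega] at hhock
    omega
  have hd1 : 1 ≤ D.card := by
    by_contra h
    push_neg at h
    have hD0 : D = ∅ := Finset.card_eq_zero.mp (by omega)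
    apply hG.1
    apply complete_isHamiltonian h3'
    intro a b hab
    exact hclq a b (by simp [hD0]) (by simp [hD0]) hab
  have hdegD : ∀ v ∈ D, G.degree v ≤ D.card := by
    intro v hv
    have hvm : G.degree v ≤ m := (Finset.mem_filter.mp hv).2
    have hex : ∃ u, u ∉ D ∧ u ≠ v ∧ ¬ G.Adj u v := by
      by_contra hno
      push_neg at hno
      have hsub : (Finset.univ \ D) ⊆ G.neighborFinset v := by
        intro u hu
        rw [Finset.mem_sdiff] at hu
        have hune : u ≠ v := fun h => hu.2 (h ▸ hv)
        exact (G.mem_neighborFinset v u).mpr (hno u hu.2 hune).symm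
      have hge := Finset.card_le_card hsub
      rw [Finset.card_sdiff_of_subset (Finset.subset_univ _), Finset.card_univ, hcard] at hge
      have hdeg' : (G.neighborFinset v).card = G.degree v := rfl
      omega
    obtain ⟨u, huD, hune, hnadj⟩ := hex
    have h1 := hOre u v hune hnadj
    have h2 : n - D.card - 1 ≤ G.degree u := by
      have hsub : (Finset.univ \ D).erase u ⊆ G.neighborFinset u := by
        intro w hw
        rw [Finset.mem_erase, Finset.mem_sdiff] at hw
        exact (G.mem_neighborFinset u w).mpr (hclq u w huD hw.2.2 (fun h => hw.1 h.symm))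
      have hle := Finset.card_le_card hsub
      rw [Finset.card_erase_of_mem
          (by rw [Finset.mem_sdiff]; exact ⟨Finset.mem_univ _, huD⟩),
        Finset.card_sdiff_of_subset (Finset.subset_univ _), Finset.card_univ, hcard] at hle
      have hdeg' : (G.neighborFinset u).card = G.degree u := rfl
      omega
    omega
  exact ⟨D.card, hd1, hdm, D, rfl, hdegD, hclq⟩
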